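/- Let p ≥ 2 be a real number. There exists a constant C > 1 (depending only on p) such that for all ξ ∈ Matrix (Fin 3) (Fin 3) ℝ, C^{-1}‖ξ‖^p − C ≤ G_p(ξ) ≤ C‖ξ‖^p + C, where G_p(ξ) := max(μ₁^{p/2} + μ₂^{p/2} + μ₃^{p/2} − 3, 0) and μ₁, μ₂, μ₃ are the (real) eigenvalues of the symmetric positive semidefinite matrix C̃(ξ) := (I₃ + ξ)ᵀ(I₃ + ξ). -/

import Mathlib

open Matrix

section Aux

lemma trace_transpose_mul_self_nonneg' {M N : ℕ} (ξ : Matrix (Fin M) (Fin N) ℝ) :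
    0 ≤ (ξᵀ * ξ).trace := by
  rw [Matrix.trace]
  refine Finset.sum_nonneg fun j _ => ?_
  simp only [Matrix.diag_apply, Matrix.mul_apply, Matrix.transpose_apply]
  exact Finset.sum_nonneg fun i _ => mul_self_nonneg _

lemma trace_eq_sum_eig {A : Matrix (Fin 3) (Fin 3) ℝ} (hA : A.IsHermitian) :
    A.trace = ∑ i, hA.eigenvalues i := by
  simpa using hA.trace_eq_sum_eigenvalues

lemma sum_rpow_le_rpow_sum {q : ℝ} (hq : 1 ≤ q) (a : Fin 3 → ℝ) (ha : ∀ i, 0 ≤ a i) :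
    ∑ i, a i ^ q ≤ (∑ i, a i) ^ q := by
  set s := ∑ i, a i with hs
  have hs0 : 0 ≤ s := Finset.sum_nonneg fun i _ => ha i
  rcases eq_or_lt_of_le hs0 with h | h
  · have hz : ∀ i, a i = 0 := by
      intro i
      have := Finset.sum_eq_zero_iff_of_nonneg (fun i _ => ha i) |>.mp h.symm
      exact this i (Finset.mem_univ i)
    have : ∑ i, a i ^ q = 0 := by
      simp [hz, Real.zero_rpow (show q ≠ 0 by linarith)]
    rw [this]
    exact Real.rpow_nonneg hs0 q
  · have key : ∀ i, a i ^ q ≤ s ^ (q - 1) * a i := by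
      intro i
      rcases eq_or_lt_of_le (ha i) with h0 | h0
      · rw [← h0, Real.zero_rpow (by linarith), mul_zero]
      · have hle : a i ≤ s := Finset.single_le_sum (fun i _ => ha i) (Finset.mem_univ i)
        calc a i ^ q = a i ^ (q - 1) * a i := by
              rw [← Real.rpow_add_one (ne_of_gt h0)]; ring_nf
          _ ≤ s ^ (q - 1) * a i :=
              mul_le_mul_of_nonneg_right
                (Real.rpow_le_rpow (ha i) hle (by linarith)) (ha i)
    calc ∑ i, a i ^ q ≤ ∑ i, s ^ (q - 1) * a i := Finset.sum_le_sum fun i _ => key i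
      _ = s ^ (q - 1) * s := by rw [← Finset.mul_sum]
      _ = s ^ q := by rw [← Real.rpow_add_one (ne_of_gt h)]; ring_nf

lemma rpow_sum_le_mul_sum_rpow {q : ℝ} (hq : 1 ≤ q) (a : Fin 3 → ℝ) (ha : ∀ i, 0 ≤ a i) :
    (∑ i, a i) ^ q ≤ 3 ^ (q - 1) * ∑ i, a i ^ q := by
  have h := Real.rpow_arith_mean_le_arith_mean_rpow Finset.univ (fun _ => (3:ℝ)⁻¹) a
    (fun i _ => by norm_num) (by norm_num) (fun i _ => ha i) hq
  have h3 : (0:ℝ) < 3 := by norm_num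
  rw [← Finset.mul_sum, ← Finset.mul_sum] at h
  rw [Real.mul_rpow (by norm_num) (Finset.sum_nonneg fun i _ => ha i)] at h
  have hinv : ((3:ℝ)⁻¹) ^ q = (3 ^ q)⁻¹ := Real.inv_rpow (le_of_lt h3) q
  rw [hinv] at h
  have h3q : (0:ℝ) < 3 ^ q := Real.rpow_pos_of_pos h3 q
  have := mul_le_mul_of_nonneg_left h (le_of_lt h3q)
  rw [mul_inv_cancel_left₀ (ne_of_gt h3q)] at this
  calc (∑ i, a i) ^ q ≤ 3 ^ q * (3⁻¹ * ∑ i, a i ^ q) := this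
    _ = 3 ^ (q - 1) * ∑ i, a i ^ q := by
        rw [← mul_assoc]
        congr 1
        rw [Real.rpow_sub h3, Real.rpow_one]
        ring

lemma add_rpow_le' {q x y : ℝ} (hq : 1 ≤ q) (hx : 0 ≤ x) (hy : 0 ≤ y) :
    (x + y) ^ q ≤ 2 ^ q * (x ^ q + y ^ q) := by
  have hm : 0 ≤ max x y := le_trans hx (le_max_left x y)
  have h1 : x + y ≤ 2 * max x y := by
    rcases max_cases x y with ⟨he, hle⟩ | ⟨he, hle⟩ <;> rw [he] <;> linarith
  calc (x + y) ^ q ≤ (2 * max x y) ^ q :=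
        Real.rpow_le_rpow (by linarith) h1 (by linarith)
    _ = 2 ^ q * (max x y) ^ q := Real.mul_rpow (by norm_num) hm
    _ ≤ 2 ^ q * (x ^ q + y ^ q) := by
        refine mul_le_mul_of_nonneg_left ?_ (Real.rpow_nonneg (by norm_num) q)
        rcases max_cases x y with ⟨he, _⟩ | ⟨he, _⟩ <;> rw [he]
        · nlinarith [Real.rpow_nonneg hy q]
        · nlinarith [Real.rpow_nonneg hx q]

end Aux

/-- The Frobenius norm of a real matrix: `‖ξ‖ = (tr(ξᵀξ))^(1/2)`. -/
noncomputable def frobNorm {M N : ℕ} (ξ : Matrix (Fin M) (Fin N) ℝ) : ℝ :=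
  Real.sqrt ((ξᵀ * ξ).trace)

/-- The right Cauchy–Green tensor `C̃(ξ) = (I₃ + ξ)ᵀ(I₃ + ξ)`. -/
noncomputable def Ctil (ξ : Matrix (Fin 3) (Fin 3) ℝ) : Matrix (Fin 3) (Fin 3) ℝ :=
  (1 + ξ)ᵀ * (1 + ξ)

/-- `C̃(ξ)` is a symmetric (hermitian) real matrix. -/
lemma Ctil_isHermitian (ξ : Matrix (Fin 3) (Fin 3) ℝ) : (Ctil ξ).IsHermitian := by
  have h := Matrix.isHermitian_conjTranspose_mul_self (1 + ξ)
  rwa [Matrix.conjTranspose_eq_transpose_of_trivial] at h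

/-- The Ogden-type density `G_p(ξ) = max(μ₁^{p/2} + μ₂^{p/2} + μ₃^{p/2} − 3, 0)`,
where the `μᵢ` are the eigenvalues of `C̃(ξ)`. -/
noncomputable def Gp (p : ℝ) (ξ : Matrix (Fin 3) (Fin 3) ℝ) : ℝ :=
  max ((∑ i, (Ctil_isHermitian ξ).eigenvalues i ^ (p / 2)) - 3) 0

section Aux2

lemma sq_frobNorm {M N : ℕ} (ξ : Matrix (Fin M) (Fin N) ℝ) :
    frobNorm ξ ^ 2 = (ξᵀ * ξ).trace :=
  Real.sq_sqrt (trace_transpose_mul_self_nonneg' ξ)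

lemma frobNorm_nonneg {M N : ℕ} (ξ : Matrix (Fin M) (Fin N) ℝ) : 0 ≤ frobNorm ξ :=
  Real.sqrt_nonneg _

attribute [local instance] Matrix.frobeniusNormedAddCommGroup

lemma frobNorm_eq_norm {M N : ℕ} (ξ : Matrix (Fin M) (Fin N) ℝ) : frobNorm ξ = ‖ξ‖ := by
  rw [Matrix.frobenius_norm_def, frobNorm, Real.sqrt_eq_rpow]
  congr 1
  rw [Matrix.trace]
  rw [Finset.sum_comm (s := Finset.univ) (t := Finset.univ)
    (f := fun i j => ‖ξ i j‖ ^ (2:ℝ))]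
  refine Finset.sum_congr rfl fun j _ => ?_
  simp only [Matrix.diag_apply, Matrix.mul_apply, Matrix.transpose_apply]
  refine Finset.sum_congr rfl fun i _ => ?_
  rw [Real.rpow_two, Real.norm_eq_abs, sq_abs, sq]

lemma frobNorm_one' : frobNorm (1 : Matrix (Fin 3) (Fin 3) ℝ) = Real.sqrt 3 := by
  rw [frobNorm]
  norm_num [Matrix.trace]

lemma frobNorm_triangle₁ (ξ : Matrix (Fin 3) (Fin 3) ℝ) :
    frobNorm (1 + ξ) ≤ Real.sqrt 3 + frobNorm ξ := by
  have := norm_add_le (1 : Matrix (Fin 3) (Fin 3) ℝ) ξ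
  rw [← frobNorm_eq_norm, ← frobNorm_eq_norm, ← frobNorm_eq_norm, frobNorm_one'] at this
  exact this

lemma frobNorm_triangle₂ (ξ : Matrix (Fin 3) (Fin 3) ℝ) :
    frobNorm ξ ≤ Real.sqrt 3 + frobNorm (1 + ξ) := by
  have h : ξ = (1 + ξ) + (-1) := by abel
  have := norm_add_le ((1 : Matrix (Fin 3) (Fin 3) ℝ) + ξ) (-1)
  rw [← h, norm_neg, ← frobNorm_eq_norm, ← frobNorm_eq_norm, ← frobNorm_eq_norm,
    frobNorm_one'] at this
  linarith

end Aux2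

/-- The two-sided estimate (2.30) of Example 3 for the Ogden-type
hyper-elastic energy density. -/
theorem ogden_two_sided_bound (p : ℝ) (hp : 2 ≤ p) :
    ∃ C : ℝ, 1 < C ∧ ∀ ξ : Matrix (Fin 3) (Fin 3) ℝ,
      C⁻¹ * frobNorm ξ ^ p - C ≤ Gp p ξ ∧ Gp p ξ ≤ C * frobNorm ξ ^ p + C := by
  have hq : (1:ℝ) ≤ p / 2 := by linarith
  have hp0 : (0:ℝ) ≤ p := by linarith
  set A := (2:ℝ) ^ p with hA_def
  set B := (3:ℝ) ^ (p / 2) with hB_def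
  set D := (3:ℝ) ^ (p / 2 - 1) with hD_def
  have hA0 : 0 < A := Real.rpow_pos_of_pos two_pos p
  have hB0 : 0 < B := Real.rpow_pos_of_pos (by norm_num) _
  have hD0 : 0 < D := Real.rpow_pos_of_pos (by norm_num) _
  have hA1 : 1 ≤ A := Real.one_le_rpow (by norm_num) hp0
  have hB1 : 1 ≤ B := Real.one_le_rpow (by norm_num) (by linarith)
  have hBD : B = 3 * D := by
    rw [hB_def, hD_def, Real.rpow_sub (by norm_num), Real.rpow_one]
    field_simp
  refine ⟨A * B + 6, by nlinarith, fun ξ => ?_⟩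
  set C := A * B + 6 with hC_def
  have hC0 : 0 < C := by nlinarith
  have hC4 : 4 ≤ C := by nlinarith
  set n := frobNorm ξ with hn_def
  set t := frobNorm (1 + ξ) with ht_def
  have hn0 : 0 ≤ n := frobNorm_nonneg ξ
  have ht0 : 0 ≤ t := frobNorm_nonneg _
  have hN0 : 0 ≤ n ^ p := Real.rpow_nonneg hn0 p
  have hT0 : 0 ≤ t ^ p := Real.rpow_nonneg ht0 p
  set μ : Fin 3 → ℝ := (Ctil_isHermitian ξ).eigenvalues with hμ_def
  have hPSD : (Ctil ξ).PosSemidef := by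
    have h := Matrix.posSemidef_conjTranspose_mul_self (1 + ξ)
    rw [Matrix.conjTranspose_eq_transpose_of_trivial] at h
    exact h
  have hμ : ∀ i, 0 ≤ μ i := fun i => hPSD.eigenvalues_nonneg i
  have hsum : ∑ i, μ i = t ^ 2 := by
    rw [← trace_eq_sum_eig (Ctil_isHermitian ξ), sq_frobNorm]
    rfl
  set S := ∑ i, μ i ^ (p / 2) with hS_def
  have hS0 : 0 ≤ S := Finset.sum_nonneg fun i _ => Real.rpow_nonneg (hμ i) _
  have hGp : Gp p ξ = max (S - 3) 0 := rfl
  have ht2q : ((t ^ 2 : ℝ)) ^ (p / 2) = t ^ p := by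
    rw [← Real.rpow_natCast_mul ht0 2 (p / 2)]
    congr 1
    push_cast
    ring
  have hsqrt3p : (Real.sqrt 3) ^ p = B := by
    rw [Real.sqrt_eq_rpow, ← Real.rpow_mul (by norm_num : (0:ℝ) ≤ 3), hB_def]
    ring_nf
  -- upper bound pieces
  have hS_le : S ≤ t ^ p := by
    calc S ≤ (∑ i, μ i) ^ (p / 2) := sum_rpow_le_rpow_sum hq μ hμ
      _ = (t ^ 2) ^ (p / 2) := by rw [hsum]
      _ = t ^ p := ht2q
  have htp_le : t ^ p ≤ A * B + A * n ^ p := by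
    calc t ^ p ≤ (Real.sqrt 3 + n) ^ p :=
          Real.rpow_le_rpow ht0 (frobNorm_triangle₁ ξ) hp0
      _ ≤ 2 ^ p * ((Real.sqrt 3) ^ p + n ^ p) :=
          add_rpow_le' (by linarith) (Real.sqrt_nonneg 3) hn0
      _ = A * B + A * n ^ p := by rw [hsqrt3p, hA_def]; ring
  -- lower bound pieces
  have hS_ge : t ^ p ≤ D * S := by
    calc t ^ p = (t ^ 2) ^ (p / 2) := ht2q.symm
      _ = (∑ i, μ i) ^ (p / 2) := by rw [hsum]
      _ ≤ D * S := rpow_sum_le_mul_sum_rpow hq μ hμ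
  have hnp_le : n ^ p ≤ A * B + A * t ^ p := by
    calc n ^ p ≤ (Real.sqrt 3 + t) ^ p :=
          Real.rpow_le_rpow hn0 (frobNorm_triangle₂ ξ) hp0
      _ ≤ 2 ^ p * ((Real.sqrt 3) ^ p + t ^ p) :=
          add_rpow_le' (by linarith) (Real.sqrt_nonneg 3) ht0
      _ = A * B + A * t ^ p := by rw [hsqrt3p, hA_def]; ring
  clear_value A B D C n t μ S
  constructor
  · -- lower bound
    have hAT : A * t ^ p ≤ A * (D * S) := mul_le_mul_of_nonneg_left hS_ge hA0.le
    have hADC : A * D ≤ C := by nlinarith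
    have hADS : A * D * S ≤ C * S := mul_le_mul_of_nonneg_right hADC hS0
    have hmain : n ^ p ≤ C * (S - 3) + C * C := by nlinarith
    have h1 : C⁻¹ * n ^ p ≤ C⁻¹ * (C * (S - 3) + C * C) :=
      mul_le_mul_of_nonneg_left hmain (inv_nonneg.mpr hC0.le)
    have h2 : C⁻¹ * (C * (S - 3) + C * C) = (S - 3) + C := by
      rw [mul_add, inv_mul_cancel_left₀ hC0.ne', inv_mul_cancel_left₀ hC0.ne']
    rw [h2] at h1
    have h3 : S - 3 ≤ Gp p ξ := by rw [hGp]; exact le_max_left _ _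
    linarith
  · -- upper bound
    rw [hGp]
    have hAC : A ≤ C := by nlinarith
    have hANC : A * n ^ p ≤ C * n ^ p := mul_le_mul_of_nonneg_right hAC hN0
    apply max_le
    · linarith [hS_le, htp_le, hANC]
    · have := mul_nonneg hC0.le hN0
      linarith
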